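/- With the notation of the previous statement, the map F: [0,∞] × C_{β'} → C_{β'} (extended by F(∞, U) = 1) is continuous and exhibits a contraction of the cocycle space C_{β'}: F(0, U) = U and F(∞, U) = 1 for all U. Hence the space of cocycles of an E₀-semigroup of the form β ⊗ id on B(H ⊗ L²(ℝ₊)) is contractible. -/

import Mathlib

open scoped NNReal ENNReal ComplexInnerProductSpace

open Filter

set_option linter.unusedSectionVars false
section Aux
variable {K : Type*} [NormedAddCommGroup K] [InnerProductSpace ℂ K] [CompleteSpace K]

lemma isom_norm (T : K →L[ℂ] K) (h : star T * T = 1) (ξ : K) : ‖T ξ‖ = ‖ξ‖ := by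
  have h2 : ⟪T ξ, T ξ⟫ = ⟪ξ, ξ⟫ := by
    rw [← ContinuousLinearMap.adjoint_inner_left, ← ContinuousLinearMap.star_eq_adjoint,
      ← ContinuousLinearMap.mul_apply, h, ContinuousLinearMap.one_apply]
  rw [inner_self_eq_norm_sq_to_K, inner_self_eq_norm_sq_to_K] at h2
  have h3 : ‖T ξ‖ ^ 2 = ‖ξ‖ ^ 2 := by exact_mod_cast h2
  nlinarith [norm_nonneg (T ξ), norm_nonneg ξ]

lemma isom_opNorm_le (T : K →L[ℂ] K) (h : star T * T = 1) : ‖T‖ ≤ 1 :=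
  T.opNorm_le_bound zero_le_one (fun ξ => by rw [isom_norm T h, one_mul])

lemma bddApply {X : Type*} [TopologicalSpace X] (T : X → (K →L[ℂ] K)) (C : ℝ)
    (hC : ∀ x, ‖T x‖ ≤ C) (hT : ∀ ξ : K, Continuous fun x => T x ξ)
    (f : X → K) (hf : Continuous f) : Continuous fun x => T x (f x) := by
  rw [continuous_iff_continuousAt]
  intro x₀
  rw [ContinuousAt, ← tendsto_sub_nhds_zero_iff]
  have heq : (fun x => T x (f x) - T x₀ (f x₀)) =
      fun x => T x (f x - f x₀) + (T x (f x₀) - T x₀ (f x₀)) := by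
    funext x; simp only [map_sub]; abel
  rw [heq]
  have h1 : Tendsto (fun x => T x (f x - f x₀)) (nhds x₀) (nhds 0) := by
    apply squeeze_zero_norm
      (fun x => ((T x).le_opNorm _).trans (mul_le_mul_of_nonneg_right (hC x) (norm_nonneg _)))
    have h0 : Tendsto (fun x => f x - f x₀) (nhds x₀) (nhds 0) :=
      tendsto_sub_nhds_zero_iff.2 (hf.tendsto x₀)
    simpa using (tendsto_const_nhds (x := C)).mul h0.norm
  have h2 : Tendsto (fun x => T x (f x₀) - T x₀ (f x₀)) (nhds x₀) (nhds 0) :=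
    tendsto_sub_nhds_zero_iff.2 ((hT (f x₀)).tendsto x₀)
  simpa using h1.add h2

end Aux

section Aux2
set_option linter.unusedSectionVars false
variable {K : Type*} [NormedAddCommGroup K] [InnerProductSpace ℂ K] [CompleteSpace K]
variable (S : ℝ≥0 → K →L[ℂ] K)
  (hS0 : S 0 = 1) (hSsemigroup : ∀ l m : ℝ≥0, S (l + m) = S l * S m)
  (hSisometry : ∀ l : ℝ≥0, star (S l) * S l = 1)
  (hScont : ∀ ξ : K, Continuous fun l => S l ξ)

include hS0 hSisometry hScont in
lemma adj_tendsto_zero (ξ : K) :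
    Filter.Tendsto (fun l => star (S l) ξ) (nhds 0) (nhds ξ) := by
  have hb : ∀ l, ‖star (S l) ξ‖ ≤ ‖ξ‖ := fun l => by
    calc ‖star (S l) ξ‖ ≤ ‖star (S l)‖ * ‖ξ‖ := (star (S l)).le_opNorm ξ
    _ ≤ 1 * ‖ξ‖ := by
        apply mul_le_mul_of_nonneg_right _ (norm_nonneg _)
        rw [norm_star]; exact isom_opNorm_le _ (hSisometry l)
    _ = ‖ξ‖ := one_mul _
  have key : ∀ l, ‖star (S l) ξ - ξ‖ ^ 2 ≤
      2 * ‖ξ‖ ^ 2 - 2 * RCLike.re (⟪ξ, S l ξ⟫) := by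
    intro l
    have hinner : ⟪star (S l) ξ, ξ⟫ = ⟪ξ, S l ξ⟫ := by
      rw [ContinuousLinearMap.star_eq_adjoint, ContinuousLinearMap.adjoint_inner_left]
    have := norm_sub_sq (𝕜 := ℂ) (star (S l) ξ) ξ
    rw [hinner] at this
    rw [this]
    have h4 : ‖star (S l) ξ‖ ^ 2 ≤ ‖ξ‖ ^ 2 := by
      apply pow_le_pow_left₀ (norm_nonneg _) (hb l)
    nlinarith
  have hg : Filter.Tendsto (fun l => 2 * ‖ξ‖ ^ 2 - 2 * RCLike.re (⟪ξ, S l ξ⟫))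
      (nhds 0) (nhds 0) := by
    have h1 : Filter.Tendsto (fun l => S l ξ) (nhds (0 : ℝ≥0)) (nhds ξ) := by
      have := (hScont ξ).tendsto 0
      rwa [hS0, ContinuousLinearMap.one_apply] at this
    have h2 : Filter.Tendsto (fun l => RCLike.re (⟪ξ, S l ξ⟫)) (nhds (0 : ℝ≥0))
        (nhds (RCLike.re (⟪ξ, ξ⟫ : ℂ))) :=
      (RCLike.continuous_re.tendsto _).comp ((continuous_const.inner continuous_id).tendsto ξ |>.comp h1)
    have h3 : RCLike.re (⟪ξ, ξ⟫ : ℂ) = ‖ξ‖ ^ 2 := inner_self_eq_norm_sq ξ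
    rw [h3] at h2
    have := (tendsto_const_nhds (x := 2 * ‖ξ‖ ^ 2)).sub ((tendsto_const_nhds (x := (2:ℝ))).mul h2)
    simpa using this
  have hsq : Filter.Tendsto (fun l => ‖star (S l) ξ - ξ‖ ^ 2) (nhds 0) (nhds 0) :=
    squeeze_zero (fun l => sq_nonneg _) key hg
  have hnorm : Filter.Tendsto (fun l => ‖star (S l) ξ - ξ‖) (nhds 0) (nhds 0) := by
    have := (Real.continuous_sqrt.tendsto 0).comp hsq
    simpa [Function.comp_def, Real.sqrt_sq (norm_nonneg _)] using this
  rw [← tendsto_sub_nhds_zero_iff]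
  exact tendsto_zero_iff_norm_tendsto_zero.2 hnorm

include hS0 hSsemigroup hSisometry hScont in
lemma adjCont (ξ : K) : Continuous fun l : ℝ≥0 => star (S l) ξ := by
  rw [continuous_iff_continuousAt]
  intro l₀
  rw [ContinuousAt, ← nhdsLE_sup_nhdsGE l₀, Filter.tendsto_sup]
  have hsub0 : Filter.Tendsto (fun μ : ℝ≥0 => l₀ - μ) (nhds l₀) (nhds 0) := by
    have : Filter.Tendsto (fun μ : ℝ≥0 => l₀ - μ) (nhds l₀) (nhds (l₀ - l₀)) :=
      (continuous_const.sub continuous_id).tendsto l₀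
    simpa using this
  have hsub0' : Filter.Tendsto (fun μ : ℝ≥0 => μ - l₀) (nhds l₀) (nhds 0) := by
    have : Filter.Tendsto (fun μ : ℝ≥0 => μ - l₀) (nhds l₀) (nhds (l₀ - l₀)) :=
      (continuous_id.sub continuous_const).tendsto l₀
    simpa using this
  constructor
  · -- left limit
    rw [← tendsto_sub_nhds_zero_iff]
    apply squeeze_zero_norm' (a := fun μ => ‖ξ - star (S (l₀ - μ)) ξ‖)
    · filter_upwards [self_mem_nhdsWithin] with μ (hμ : μ ≤ l₀)
      have hfact : S l₀ = S (l₀ - μ) * S μ := by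
        rw [← hSsemigroup, tsub_add_cancel_of_le hμ]
      have : star (S l₀) ξ = star (S μ) (star (S (l₀ - μ)) ξ) := by
        rw [hfact, star_mul, ContinuousLinearMap.mul_apply]
      rw [this, ← map_sub]
      calc ‖star (S μ) (ξ - star (S (l₀ - μ)) ξ)‖
          ≤ ‖star (S μ)‖ * ‖ξ - star (S (l₀ - μ)) ξ‖ := ContinuousLinearMap.le_opNorm _ _
        _ ≤ 1 * ‖ξ - star (S (l₀ - μ)) ξ‖ := by
            apply mul_le_mul_of_nonneg_right _ (norm_nonneg _)
            rw [norm_star]; exact isom_opNorm_le _ (hSisometry μ)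
        _ = _ := one_mul _
    · have h1 : Filter.Tendsto (fun μ : ℝ≥0 => star (S (l₀ - μ)) ξ) (nhdsWithin l₀ (Set.Iic l₀))
          (nhds ξ) :=
        (adj_tendsto_zero S hS0 hSisometry hScont ξ).comp (hsub0.mono_left nhdsWithin_le_nhds)
      have := ((tendsto_const_nhds (x := ξ)).sub h1).norm
      simpa using this
  · -- right limit
    apply Filter.Tendsto.congr'
      (f₁ := fun μ => star (S l₀) (star (S (μ - l₀)) ξ))
    · filter_upwards [self_mem_nhdsWithin] with μ (hμ : l₀ ≤ μ)
      have hfact : S μ = S (μ - l₀) * S l₀ := by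
        rw [← hSsemigroup, tsub_add_cancel_of_le hμ]
      rw [hfact, star_mul, ContinuousLinearMap.mul_apply]
    · have h1 : Filter.Tendsto (fun μ : ℝ≥0 => star (S (μ - l₀)) ξ) (nhdsWithin l₀ (Set.Ici l₀))
          (nhds ξ) :=
        (adj_tendsto_zero S hS0 hSisometry hScont ξ).comp (hsub0'.mono_left nhdsWithin_le_nhds)
      exact ((star (S l₀)).continuous.tendsto ξ).comp h1

end Aux2

section Aux3
variable {A : Type*} [Ring A] [StarRing A]

lemma key_mul (s : A) (hs : star s * s = 1) (a b : A) :
    ((1 - s * star s) + s * a * star s) * ((1 - s * star s) + s * b * star s) =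
    (1 - s * star s) + s * (a * b) * star s := by
  have hs' : ∀ x : A, star s * (s * x) = x := fun x => by
    rw [← mul_assoc, hs, one_mul]
  have hPs : (1 - s * star s) * s = 0 := by
    rw [sub_mul, one_mul, mul_assoc, hs, mul_one, sub_self]
  have hsP : star s * (1 - s * star s) = 0 := by
    rw [mul_sub, mul_one, hs' (star s), sub_self]
  have hPP : (1 - s * star s) * (1 - s * star s) = (1 - s * star s) := by
    rw [mul_sub, mul_one, ← mul_assoc, hPs, zero_mul, sub_zero]
  rw [add_mul, mul_add, mul_add, hPP]
  have h1 : (1 - s * star s) * (s * b * star s) = 0 := by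
    rw [← mul_assoc, ← mul_assoc, hPs, zero_mul, zero_mul]
  have h2 : s * a * star s * (1 - s * star s) = 0 := by
    rw [mul_assoc, mul_assoc, hsP, mul_zero, mul_zero]
  have h3 : s * a * star s * (s * b * star s) = s * (a * b) * star s := by
    rw [mul_assoc (s * a), mul_assoc s b, hs' (b * star s), ← mul_assoc, mul_assoc s a b]
  rw [h1, h2, h3, add_zero, zero_add]

lemma key_star (s : A) (a : A) :
    star ((1 - s * star s) + s * a * star s) = (1 - s * star s) + s * (star a) * star s := by
  simp [star_sub, star_mul, mul_assoc]

lemma key_unitary (s : A) (hs : star s * s = 1) (a : A) (ha : a ∈ unitary A) :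
    ((1 - s * star s) + s * a * star s) ∈ unitary A := by
  rw [Unitary.mem_iff]
  constructor
  · rw [key_star, key_mul s hs, Unitary.mem_iff.1 ha |>.1, mul_one, sub_add_cancel]
  · rw [key_star, key_mul s hs, Unitary.mem_iff.1 ha |>.2, mul_one, sub_add_cancel]

end Aux3

section Aux4
variable {K : Type*} [NormedAddCommGroup K] [InnerProductSpace ℂ K] [CompleteSpace K]

lemma apContU [t : TopologicalSpace (unitary (K →L[ℂ] K))]
    (ht : t = TopologicalSpace.induced
      (fun (u : unitary (K →L[ℂ] K)) (x : K) => (u : K →L[ℂ] K) x) Pi.topologicalSpace)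
    (ξ : K) : Continuous fun v : unitary (K →L[ℂ] K) => (v : K →L[ℂ] K) ξ := by
  have h1 : @Continuous _ _ t _
      (fun (u : unitary (K →L[ℂ] K)) (x : K) => (u : K →L[ℂ] K) x) := by
    rw [continuous_iff_le_induced, ht]
  exact (continuous_apply ξ).comp h1

lemma contIntoU [t : TopologicalSpace (unitary (K →L[ℂ] K))]
    (ht : t = TopologicalSpace.induced
      (fun (u : unitary (K →L[ℂ] K)) (x : K) => (u : K →L[ℂ] K) x) Pi.topologicalSpace)
    {X : Type*} [TopologicalSpace X] (g : X → unitary (K →L[ℂ] K))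
    (h : ∀ ξ : K, Continuous fun x => ((g x : K →L[ℂ] K)) ξ) : Continuous g := by
  subst ht
  rw [continuous_induced_rng]
  exact continuous_pi h

end Aux4


/-- An E₀-semigroup on `B(K)`. -/
structure E0Semigroup (K : Type*) [NormedAddCommGroup K] [InnerProductSpace ℂ K]
    [CompleteSpace K] where
  toFun : ℝ≥0 → (K →L[ℂ] K) →⋆ₐ[ℂ] (K →L[ℂ] K)
  map_zero' : toFun 0 = StarAlgHom.id ℂ (K →L[ℂ] K)
  semigroup' : ∀ t s, toFun (t + s) = (toFun t).comp (toFun s)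
  weakly_continuous' : ∀ (a : K →L[ℂ] K) (ξ η : K),
    Continuous fun t => ⟪ξ, toFun t a η⟫

set_option maxHeartbeats 1000000 in
set_option synthInstance.maxHeartbeats 400000 in
/-- With the notation of Statement 8 (an E₀-semigroup `β'` absorbing a
strongly continuous semigroup of isometries `S`, e.g. `β' = β ⊗ id` on `B(H ⊗ L²(ℝ₊))`
with `S_λ = 1 ⊗ V_λ` the right shift, for which `S_λ S_λ* → 0` strongly), the map
`F : [0,∞] × C_{β'} → C_{β'}`, `F(λ,U)_t = P_λ + S_λ U_t S_λ*`, extended by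
`F(∞,U) = 1`, is continuous, satisfies `F(0,U) = U` and `F(∞,U) = 1`, and exhibits a
contraction of the cocycle space `C_{β'}`; hence `C_{β'}` is contractible. -/
theorem stmt9 {K : Type*} [NormedAddCommGroup K] [InnerProductSpace ℂ K] [CompleteSpace K]
    [TopologicalSpace.SeparableSpace K]
    (β' : E0Semigroup K) (S : ℝ≥0 → K →L[ℂ] K)
    (hS0 : S 0 = 1) (hSsemigroup : ∀ l m : ℝ≥0, S (l + m) = S l * S m)
    (hSisometry : ∀ l : ℝ≥0, star (S l) * S l = 1)
    (hScont : ∀ ξ : K, Continuous fun l => S l ξ)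
    (hSfixed : ∀ (t l : ℝ≥0), β'.toFun t (S l) = S l)
    (hSshift : ∀ ξ : K, Filter.Tendsto (fun l => (S l * star (S l)) ξ) Filter.atTop (nhds 0))
    -- the strong operator topology on `U(K)`:
    [tU : TopologicalSpace (unitary (K →L[ℂ] K))]
    (htU : tU = TopologicalSpace.induced
      (fun (u : unitary (K →L[ℂ] K)) (x : K) => (u : K →L[ℂ] K) x) Pi.topologicalSpace)
    -- the space `C_{β'}` of `β'`-cocycles:
    (Cβ' : Set C(ℝ≥0, unitary (K →L[ℂ] K)))
    (hCβ' : Cβ' = {f : C(ℝ≥0, unitary (K →L[ℂ] K)) | f 0 = 1 ∧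
        ∀ t s, ((f (t + s) : K →L[ℂ] K) =
          (f t : K →L[ℂ] K) * β'.toFun t (f s : K →L[ℂ] K))}) :
    (∃ F : C(ℝ≥0∞ × Cβ', Cβ'),
        (∀ u : Cβ', F (0, u) = u) ∧
        (∀ u : Cβ', ((F (⊤, u) : Cβ') : C(ℝ≥0, unitary (K →L[ℂ] K))) = 1) ∧
        (∀ (l : ℝ≥0) (u : Cβ') (t : ℝ≥0),
          (((F ((l : ℝ≥0∞), u) : Cβ') : C(ℝ≥0, unitary (K →L[ℂ] K))) t : K →L[ℂ] K) =
            (1 - S l * star (S l)) +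
              S l * (((u : C(ℝ≥0, unitary (K →L[ℂ] K))) t : K →L[ℂ] K)) * star (S l))) ∧
      ContractibleSpace Cβ' := by
  classical
  subst hCβ'
  set Cβ' : Set C(ℝ≥0, unitary (K →L[ℂ] K)) :=
    {f : C(ℝ≥0, unitary (K →L[ℂ] K)) | f 0 = 1 ∧
        ∀ t s, ((f (t + s) : K →L[ℂ] K) =
          (f t : K →L[ℂ] K) * β'.toFun t (f s : K →L[ℂ] K))} with hCβ'
  have hSnorm : ∀ l : ℝ≥0, ‖S l‖ ≤ 1 := fun l => isom_opNorm_le _ (hSisometry l)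
  have hUnorm : ∀ v : unitary (K →L[ℂ] K), ‖(v : K →L[ℂ] K)‖ ≤ 1 := fun v =>
    isom_opNorm_le _ ((Unitary.mem_iff.1 v.2).1)
  have hUnormval : ∀ (v : unitary (K →L[ℂ] K)) (ξ : K), ‖(v : K →L[ℂ] K) ξ‖ = ‖ξ‖ := fun v ξ =>
    isom_norm _ ((Unitary.mem_iff.1 v.2).1) ξ
  have happly : ∀ ξ : K, Continuous fun v : unitary (K →L[ℂ] K) => (v : K →L[ℂ] K) ξ :=
    fun ξ => apContU (t := tU) htU ξ
  have hadj : ∀ ξ : K, Continuous fun l : ℝ≥0 => star (S l) ξ :=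
    adjCont S hS0 hSsemigroup hSisometry hScont
  have hmemU : ∀ (l : ℝ≥0) (v : unitary (K →L[ℂ] K)),
      (1 - S l * star (S l)) + S l * (v : K →L[ℂ] K) * star (S l) ∈ unitary (K →L[ℂ] K) :=
    fun l v => key_unitary _ (hSisometry l) _ v.2
  -- the underlying function of the homotopy
  set W : (ℝ≥0∞ × ↥Cβ') × ℝ≥0 → unitary (K →L[ℂ] K) := fun p =>
    if hp : p.1.1 = ⊤ then 1 else
      ⟨(1 - S p.1.1.toNNReal * star (S p.1.1.toNNReal)) +
        S p.1.1.toNNReal * (((p.1.2 : C(ℝ≥0, unitary (K →L[ℂ] K))) p.2 : K →L[ℂ] K)) *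
          star (S p.1.1.toNNReal),
        hmemU _ _⟩ with hWdef
  have hWtop : ∀ p, p.1.1 = ⊤ → W p = 1 := fun p hp => dif_pos hp
  have hWne : ∀ p, p.1.1 ≠ ⊤ → (W p : K →L[ℂ] K) =
      (1 - S p.1.1.toNNReal * star (S p.1.1.toNNReal)) +
        S p.1.1.toNNReal * (((p.1.2 : C(ℝ≥0, unitary (K →L[ℂ] K))) p.2 : K →L[ℂ] K)) *
          star (S p.1.1.toNNReal) := by
    intro p hp
    rw [hWdef]
    simp only [dif_neg hp]
  -- pointwise (strong) continuity of W
  have hWval : ∀ ξ : K, Continuous fun p : (ℝ≥0∞ × ↥Cβ') × ℝ≥0 => (W p : K →L[ℂ] K) ξ := by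
    intro ξ
    rw [continuous_iff_continuousAt]
    intro p₀
    by_cases hp₀ : p₀.1.1 = ⊤
    · -- at infinity : squeeze against the bound `2 ‖S l S l* ξ‖`
      have hval : (W p₀ : K →L[ℂ] K) ξ = ξ := by
        rw [hWtop p₀ hp₀]
        rfl
      unfold ContinuousAt
      rw [show (fun p : (ℝ≥0∞ × ↥Cβ') × ℝ≥0 => (W p : K →L[ℂ] K) ξ) p₀ = ξ from hval,
        ← tendsto_sub_nhds_zero_iff]
      have hbound : ∀ p : (ℝ≥0∞ × ↥Cβ') × ℝ≥0, ‖(W p : K →L[ℂ] K) ξ - ξ‖ ≤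
          (if p.1.1 = ⊤ then (0:ℝ)
            else 2 * ‖(S p.1.1.toNNReal * star (S p.1.1.toNNReal)) ξ‖) := by
        intro p
        by_cases hp : p.1.1 = ⊤
        · rw [if_pos hp]
          have h1 : (W p : K →L[ℂ] K) ξ = ξ := by rw [hWtop p hp]; rfl
          rw [h1, sub_self, norm_zero]
        · rw [if_neg hp, hWne p hp]
          set l := p.1.1.toNNReal
          set v : K →L[ℂ] K := ((p.1.2 : C(ℝ≥0, unitary (K →L[ℂ] K))) p.2 : K →L[ℂ] K)
          have hv : ‖(S l * v * star (S l)) ξ‖ = ‖(S l * star (S l)) ξ‖ := by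
            simp only [ContinuousLinearMap.mul_apply]
            rw [isom_norm _ (hSisometry l), hUnormval, ← isom_norm _ (hSisometry l) (star (S l) ξ)]
          have heq : ((1 - S l * star (S l)) + S l * v * star (S l)) ξ - ξ =
              (S l * v * star (S l)) ξ - (S l * star (S l)) ξ := by
            simp only [ContinuousLinearMap.add_apply, ContinuousLinearMap.sub_apply,
              ContinuousLinearMap.one_apply]
            abel
          rw [heq]
          calc ‖(S l * v * star (S l)) ξ - (S l * star (S l)) ξ‖
              ≤ ‖(S l * v * star (S l)) ξ‖ + ‖(S l * star (S l)) ξ‖ := norm_sub_le _ _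
            _ = 2 * ‖(S l * star (S l)) ξ‖ := by rw [hv]; ring
      have hbtend : Filter.Tendsto (fun lam : ℝ≥0∞ => if lam = ⊤ then (0:ℝ)
          else 2 * ‖(S lam.toNNReal * star (S lam.toNNReal)) ξ‖) (nhds ⊤) (nhds 0) := by
        rw [Metric.tendsto_nhds]
        intro ε hε
        have := (NormedAddCommGroup.tendsto_nhds_zero.1 (hSshift ξ)) (ε / 2) (by positivity)
        obtain ⟨N, hN⟩ := Filter.eventually_atTop.1 this
        have hmem : Set.Ioi ((N : ℝ≥0∞)) ∈ nhds (⊤ : ℝ≥0∞) :=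
          IsOpen.mem_nhds isOpen_Ioi (by simp [ENNReal.coe_lt_top])
        filter_upwards [hmem] with lam hlam
        by_cases hl : lam = ⊤
        · rw [if_pos hl]
          simpa using hε
        · rw [if_neg hl]
          have h1 : N ≤ lam.toNNReal := by
            have h2 : (N : ℝ≥0∞) < (lam.toNNReal : ℝ≥0∞) := by
              rwa [ENNReal.coe_toNNReal hl]
            exact_mod_cast h2.le
          have h2 := hN _ h1
          rw [Real.dist_eq, sub_zero, abs_of_nonneg (by positivity)]
          linarith
      have hproj : Filter.Tendsto (fun p : (ℝ≥0∞ × ↥Cβ') × ℝ≥0 => p.1.1) (nhds p₀)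
          (nhds (⊤ : ℝ≥0∞)) := by
        rw [← hp₀]
        exact ((continuous_fst.comp continuous_fst).tendsto p₀)
      exact squeeze_zero_norm hbound (hbtend.comp hproj)
    · -- at a finite point
      have hH : Continuous fun q : (ℝ≥0 × ↥Cβ') × ℝ≥0 =>
          ξ - S q.1.1 (star (S q.1.1) ξ) +
            S q.1.1 ((((q.1.2 : C(ℝ≥0, unitary (K →L[ℂ] K))) q.2 : K →L[ℂ] K))
              (star (S q.1.1) ξ)) := by
        have hq1 : Continuous fun q : (ℝ≥0 × ↥Cβ') × ℝ≥0 => q.1.1 :=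
          continuous_fst.comp continuous_fst
        have hsstar : Continuous fun q : (ℝ≥0 × ↥Cβ') × ℝ≥0 => star (S q.1.1) ξ :=
          (hadj ξ).comp hq1
        have hterm2 : Continuous fun q : (ℝ≥0 × ↥Cβ') × ℝ≥0 => S q.1.1 (star (S q.1.1) ξ) :=
          bddApply (fun q => S q.1.1) 1 (fun q => hSnorm _) (fun η => by exact (hScont η).comp hq1)
            _ hsstar
        have hv : Continuous fun q : (ℝ≥0 × ↥Cβ') × ℝ≥0 =>
            (q.1.2 : C(ℝ≥0, unitary (K →L[ℂ] K))) q.2 := by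
          have hpair : Continuous fun q : (ℝ≥0 × ↥Cβ') × ℝ≥0 =>
              ((q.1.2 : C(ℝ≥0, unitary (K →L[ℂ] K))), q.2) :=
            (continuous_subtype_val.comp (continuous_snd.comp continuous_fst)).prodMk
              continuous_snd
          exact continuous_eval.comp hpair
        have hterm3 : Continuous fun q : (ℝ≥0 × ↥Cβ') × ℝ≥0 =>
            (((q.1.2 : C(ℝ≥0, unitary (K →L[ℂ] K))) q.2 : K →L[ℂ] K)) (star (S q.1.1) ξ) :=
          bddApply (fun q => (((q.1.2 : C(ℝ≥0, unitary (K →L[ℂ] K))) q.2 : K →L[ℂ] K)))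
            1 (fun q => hUnorm _) (fun η => by exact (happly η).comp hv) _ hsstar
        have hterm4 : Continuous fun q : (ℝ≥0 × ↥Cβ') × ℝ≥0 =>
            S q.1.1 ((((q.1.2 : C(ℝ≥0, unitary (K →L[ℂ] K))) q.2 : K →L[ℂ] K))
              (star (S q.1.1) ξ)) :=
          bddApply (fun q => S q.1.1) 1 (fun q => hSnorm _) (fun η => by exact (hScont η).comp hq1)
            _ hterm3
        exact (continuous_const.sub hterm2).add hterm4
      have hφ : ContinuousAt (fun p : (ℝ≥0∞ × ↥Cβ') × ℝ≥0 =>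
          (((p.1.1.toNNReal, p.1.2) : ℝ≥0 × ↥Cβ'), p.2)) p₀ := by
        apply ContinuousAt.prodMk
        · apply ContinuousAt.prodMk
          · exact (ENNReal.tendsto_toNNReal hp₀).comp
              ((continuous_fst.comp continuous_fst).continuousAt)
          · exact (continuous_snd.comp continuous_fst).continuousAt
        · exact continuous_snd.continuousAt
      have hopen : {p : (ℝ≥0∞ × ↥Cβ') × ℝ≥0 | p.1.1 ≠ ⊤} ∈ nhds p₀ := by
        refine IsOpen.mem_nhds ?_ hp₀
        exact isClosed_singleton.isOpen_compl.preimage (continuous_fst.comp continuous_fst)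
      apply ContinuousAt.congr (ContinuousAt.comp (hH.continuousAt) hφ)
      filter_upwards [hopen] with p hp
      rw [hWne p hp]
      simp only [ContinuousLinearMap.add_apply, ContinuousLinearMap.sub_apply,
        ContinuousLinearMap.one_apply, ContinuousLinearMap.mul_apply]
      rfl
  have hWcont : Continuous W := contIntoU (t := tU) htU W hWval
  set G : C((ℝ≥0∞ × ↥Cβ') × ℝ≥0, unitary (K →L[ℂ] K)) := ⟨W, hWcont⟩ with hGdef
  -- image lands in the cocycle space
  have hβmap : ∀ (t : ℝ≥0) (l : ℝ≥0) (x : K →L[ℂ] K),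
      β'.toFun t ((1 - S l * star (S l)) + S l * x * star (S l)) =
        (1 - S l * star (S l)) + S l * (β'.toFun t x) * star (S l) := by
    intro t l x
    simp only [map_add, map_sub, map_one, map_mul, map_star, hSfixed]
  have hmem : ∀ p : ℝ≥0∞ × ↥Cβ', G.curry p ∈ Cβ' := by
    intro p
    by_cases hp : p.1 = ⊤
    · constructor
      · show G.curry p 0 = 1
        rw [ContinuousMap.curry_apply]
        exact hWtop (p, 0) hp
      · intro t s
        show ((W (p, t + s) : K →L[ℂ] K)) =
          ((W (p, t) : K →L[ℂ] K)) * β'.toFun t ((W (p, s) : K →L[ℂ] K))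
        rw [hWtop (p, t + s) hp, hWtop (p, t) hp, hWtop (p, s) hp]
        have hc : ((1 : unitary (K →L[ℂ] K)) : K →L[ℂ] K) = 1 := rfl
        rw [hc, map_one, one_mul]
    · have hu := p.2.2
      constructor
      · show W (p, 0) = 1
        apply Subtype.ext
        show (W (p, 0) : K →L[ℂ] K) = ((1 : unitary (K →L[ℂ] K)) : K →L[ℂ] K)
        rw [hWne (p, 0) hp]
        have h0 : ((p.2 : C(ℝ≥0, unitary (K →L[ℂ] K))) 0 : K →L[ℂ] K) = 1 := by
          rw [hu.1]; rfl
        show (1 - S p.1.toNNReal * star (S p.1.toNNReal)) +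
            S p.1.toNNReal * ((p.2 : C(ℝ≥0, unitary (K →L[ℂ] K))) 0 : K →L[ℂ] K) *
              star (S p.1.toNNReal) = _
        rw [h0, mul_one, sub_add_cancel]
        rfl
      · intro t s
        show ((W (p, t + s) : K →L[ℂ] K)) =
          ((W (p, t) : K →L[ℂ] K)) * β'.toFun t ((W (p, s) : K →L[ℂ] K))
        rw [hWne (p, t + s) hp, hWne (p, t) hp, hWne (p, s) hp]
        rw [hβmap, key_mul _ (hSisometry _), ← hu.2 t s]
  -- the contraction
  set F : C(ℝ≥0∞ × ↥Cβ', ↥Cβ') :=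
    ⟨fun p => ⟨G.curry p, hmem p⟩, (ContinuousMap.continuous G.curry).subtype_mk _⟩ with hFdef
  have hF1 : ∀ u : ↥Cβ', F (0, u) = u := by
    intro u
    apply Subtype.ext
    apply ContinuousMap.ext
    intro t
    show W (((0 : ℝ≥0∞), u), t) = (u : C(ℝ≥0, unitary (K →L[ℂ] K))) t
    apply Subtype.ext
    rw [hWne (((0 : ℝ≥0∞), u), t) (by simp)]
    simp [hS0]
  have hF2 : ∀ u : ↥Cβ', ((F (⊤, u) : ↥Cβ') : C(ℝ≥0, unitary (K →L[ℂ] K))) = 1 := by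
    intro u
    apply ContinuousMap.ext
    intro t
    show W (((⊤ : ℝ≥0∞), u), t) = _
    rw [hWtop (((⊤ : ℝ≥0∞), u), t) rfl]
    rfl
  have hF3 : ∀ (l : ℝ≥0) (u : ↥Cβ') (t : ℝ≥0),
      (((F ((l : ℝ≥0∞), u) : ↥Cβ') : C(ℝ≥0, unitary (K →L[ℂ] K))) t : K →L[ℂ] K) =
        (1 - S l * star (S l)) +
          S l * (((u : C(ℝ≥0, unitary (K →L[ℂ] K))) t : K →L[ℂ] K)) * star (S l) := by
    intro l u t
    show ((W (((l : ℝ≥0∞), u), t) : K →L[ℂ] K)) = _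
    rw [hWne (((l : ℝ≥0∞), u), t) ENNReal.coe_ne_top]
    simp
  refine ⟨⟨F, hF1, hF2, hF3⟩, ?_⟩
  -- contractibility
  have hone : (1 : C(ℝ≥0, unitary (K →L[ℂ] K))) ∈ Cβ' := by
    constructor
    · rfl
    · intro t s
      show ((1 : unitary (K →L[ℂ] K)) : K →L[ℂ] K) =
        ((1 : unitary (K →L[ℂ] K)) : K →L[ℂ] K) *
          β'.toFun t ((1 : unitary (K →L[ℂ] K)) : K →L[ℂ] K)
      have hc : ((1 : unitary (K →L[ℂ] K)) : K →L[ℂ] K) = 1 := rfl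
      rw [hc, map_one, one_mul]
  rw [contractible_iff_id_nullhomotopic]
  refine ⟨⟨1, hone⟩, ?_⟩
  let ψ : unitInterval ≃ₜ ℝ≥0∞ := ENNReal.orderIsoUnitIntervalBirational.toHomeomorph.symm
  have hψ0 : ψ 0 = 0 := by
    show ENNReal.orderIsoUnitIntervalBirational.symm 0 = 0
    rw [OrderIso.symm_apply_eq]
    apply Subtype.ext
    simp [ENNReal.orderIsoUnitIntervalBirational_apply_coe]
  have hψ1 : ψ 1 = ⊤ := by
    show ENNReal.orderIsoUnitIntervalBirational.symm 1 = ⊤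
    rw [OrderIso.symm_apply_eq]
    apply Subtype.ext
    have h1 : ((⊤ : ℝ≥0∞)⁻¹ + 1)⁻¹ = 1 := by simp
    rw [ENNReal.orderIsoUnitIntervalBirational_apply_coe, h1, ENNReal.toReal_one]
    rfl
  refine ⟨{ toFun := fun q => F (ψ q.1, q.2)
            continuous_toFun := F.continuous.comp
              ((ψ.continuous.comp continuous_fst).prodMk continuous_snd)
            map_zero_left := ?_
            map_one_left := ?_ }⟩
  · intro u
    simp only [hψ0]
    exact hF1 u
  · intro u
    simp only [hψ1]
    apply Subtype.ext
    exact hF2 u
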